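/- arXiv:2503.14249 — 4 statements merged into one kernel-verified Lean document; each statement's English description precedes it below -/
import Mathlib

section
/- Let G be a locally compact abelian group with Haar measure μ, ω a weight on G, 1 ≤ p < ∞, and f a Borel measurable function with ∫_G |f(s)|^p ω(s) dμ(s) < ∞. Then for every s ∈ G, ω(s⁻¹)^{(1-p)/p} · |||f|||_{ω,p} ≤ |||Θ_ω^s f|||_{ω,p} ≤ ω(s)^{(p-1)/p} · |||f|||_{ω,p}, where |||h|||_{ω,p} = (∫_G |h(t)|^p ω(t) dμ(t))^{1/p}. -/
open MeasureTheory

noncomputable section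

/-- The operator `(Θ_ω^s f)(t) = f(ts) ω(ts) / ω(t)`. -/
def Theta {G : Type*} [Group G] (ω : G → ℝ) (s : G) (f : G → ℂ) : G → ℂ :=
  fun t => f (t * s) * ((ω (t * s) / ω t : ℝ) : ℂ)

/-- Norm estimates for `Θ_ω^s` on `L^p(G,ω)`:
`ω(s⁻¹)^((1-p)/p) |||f|||_{ω,p} ≤ |||Θ_ω^s f|||_{ω,p} ≤ ω(s)^((p-1)/p) |||f|||_{ω,p}`. -/
theorem theta_norm_estimates
    {G : Type*} [CommGroup G] [TopologicalSpace G] [IsTopologicalGroup G]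
    [LocallyCompactSpace G] [MeasurableSpace G] [BorelSpace G]
    (μ : Measure G) [μ.IsHaarMeasure]
    (ω : G → ℝ) (hω_meas : Measurable ω) (hω_pos : ∀ s : G, 0 < ω s)
    (hω_sub : ∀ s t : G, ω (s * t) ≤ ω s * ω t) (hω_one : ω 1 = 1)
    (p : ℝ) (hp : 1 ≤ p)
    (f : G → ℂ) (hf_meas : Measurable f)
    (hf : Integrable (fun t => ‖f t‖ ^ p * ω t) μ) (s : G) :
    ω s⁻¹ ^ ((1 - p) / p) * (∫ t, ‖f t‖ ^ p * ω t ∂μ) ^ (1 / p) ≤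
        (∫ t, ‖Theta ω s f t‖ ^ p * ω t ∂μ) ^ (1 / p) ∧
    (∫ t, ‖Theta ω s f t‖ ^ p * ω t ∂μ) ^ (1 / p) ≤
        ω s ^ ((p - 1) / p) * (∫ t, ‖f t‖ ^ p * ω t ∂μ) ^ (1 / p) := by

  have hp0 : (0:ℝ) < p := lt_of_lt_of_le one_pos hp
  have hp1 : (0:ℝ) ≤ p - 1 := by linarith
  set g : G → ℝ := fun t => ‖f t‖ ^ p * ω t with hgdef
  have hgnn : ∀ t, 0 ≤ g t := fun t =>
    mul_nonneg (Real.rpow_nonneg (norm_nonneg _) _) (hω_pos t).le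
  -- pointwise identity
  have hid : ∀ t, ‖Theta ω s f t‖ ^ p * ω t
      = g (t * s) * (ω (t * s) / ω t) ^ (p - 1) := by
    intro t
    have hb : (0:ℝ) < ω t := hω_pos t
    have ha : (0:ℝ) < ω (t * s) := hω_pos _
    have hq : (0:ℝ) < ω (t * s) / ω t := div_pos ha hb
    have h1 : ‖Theta ω s f t‖ = ‖f (t * s)‖ * (ω (t * s) / ω t) := by
      simp [Theta, abs_of_pos ha, abs_of_pos hb, abs_div]
    rw [h1, Real.mul_rpow (norm_nonneg _) hq.le]
    have h2 : (ω (t * s) / ω t) ^ p = (ω (t * s) / ω t) * (ω (t * s) / ω t) ^ (p - 1) := by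
      rw [← Real.rpow_one_add' hq.le (by linarith : (1:ℝ) + (p-1) ≠ 0)]
      ring_nf
    rw [h2, hgdef]
    field_simp
  -- pointwise bounds on the quotient power
  have hlow : ∀ t, (ω s⁻¹) ^ (1 - p) ≤ (ω (t * s) / ω t) ^ (p - 1) := by
    intro t
    have ha : (0:ℝ) < ω (t * s) := hω_pos _
    have hb : (0:ℝ) < ω t := hω_pos t
    have hs' : (0:ℝ) < ω s⁻¹ := hω_pos _
    have h : ω t ≤ ω (t * s) * ω s⁻¹ := by
      have := hω_sub (t * s) s⁻¹
      simpa [mul_assoc] using this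
    have h2 : (ω s⁻¹)⁻¹ ≤ ω (t * s) / ω t := by
      rw [le_div_iff₀ hb, inv_mul_le_iff₀ hs']
      linarith [h]
    calc (ω s⁻¹) ^ (1 - p) = ((ω s⁻¹)⁻¹) ^ (p - 1) := by
          rw [← Real.rpow_neg_one (ω s⁻¹), ← Real.rpow_mul hs'.le]
          ring_nf
      _ ≤ (ω (t * s) / ω t) ^ (p - 1) :=
          Real.rpow_le_rpow (inv_nonneg.mpr hs'.le) h2 hp1
  have hupp : ∀ t, (ω (t * s) / ω t) ^ (p - 1) ≤ (ω s) ^ (p - 1) := by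
    intro t
    have hb : (0:ℝ) < ω t := hω_pos t
    have h : ω (t * s) / ω t ≤ ω s := by
      rw [div_le_iff₀ hb]
      calc ω (t * s) ≤ ω t * ω s := hω_sub t s
        _ = ω s * ω t := mul_comm _ _
    exact Real.rpow_le_rpow (div_pos (hω_pos _) hb).le h hp1
  -- integrability
  have hh_int : Integrable (fun t => g (t * s)) μ := hf.comp_mul_right s
  have hhnn : ∀ t, 0 ≤ g (t * s) := fun t => hgnn _
  have hΘmeas : Measurable (fun t => ‖Theta ω s f t‖ ^ p * ω t) := by
    have hΘ : Measurable (Theta ω s f) := by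
      unfold Theta; fun_prop
    fun_prop
  have hub : ∀ t, ‖Theta ω s f t‖ ^ p * ω t ≤ (ω s) ^ (p - 1) * g (t * s) := by
    intro t
    rw [hid t, mul_comm ((ω s) ^ (p - 1))]
    exact mul_le_mul_of_nonneg_left (hupp t) (hgnn _)
  have hlb : ∀ t, (ω s⁻¹) ^ (1 - p) * g (t * s) ≤ ‖Theta ω s f t‖ ^ p * ω t := by
    intro t
    rw [hid t, mul_comm ((ω s⁻¹) ^ (1 - p))]
    exact mul_le_mul_of_nonneg_left (hlow t) (hgnn _)
  have hΘnn : ∀ t, 0 ≤ ‖Theta ω s f t‖ ^ p * ω t := fun t =>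
    mul_nonneg (Real.rpow_nonneg (norm_nonneg _) _) (hω_pos t).le
  have hΘint : Integrable (fun t => ‖Theta ω s f t‖ ^ p * ω t) μ := by
    apply Integrable.mono' (hh_int.const_mul ((ω s) ^ (p - 1))) hΘmeas.aestronglyMeasurable
    filter_upwards with t
    rw [Real.norm_of_nonneg (hΘnn t)]
    exact hub t
  -- integral facts
  have htrans : ∫ t, g (t * s) ∂μ = ∫ t, g t ∂μ := integral_mul_right_eq_self g s
  have hInn : 0 ≤ ∫ t, g t ∂μ := integral_nonneg hgnn
  have hJup : (∫ t, ‖Theta ω s f t‖ ^ p * ω t ∂μ) ≤ (ω s) ^ (p - 1) * ∫ t, g t ∂μ := by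
    calc (∫ t, ‖Theta ω s f t‖ ^ p * ω t ∂μ)
        ≤ ∫ t, (ω s) ^ (p - 1) * g (t * s) ∂μ :=
          integral_mono hΘint (hh_int.const_mul _) hub
      _ = (ω s) ^ (p - 1) * ∫ t, g (t * s) ∂μ := integral_const_mul _ _
      _ = (ω s) ^ (p - 1) * ∫ t, g t ∂μ := by rw [htrans]
  have hJlo : (ω s⁻¹) ^ (1 - p) * ∫ t, g t ∂μ ≤ ∫ t, ‖Theta ω s f t‖ ^ p * ω t ∂μ := by
    calc (ω s⁻¹) ^ (1 - p) * ∫ t, g t ∂μ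
        = (ω s⁻¹) ^ (1 - p) * ∫ t, g (t * s) ∂μ := by rw [htrans]
      _ = ∫ t, (ω s⁻¹) ^ (1 - p) * g (t * s) ∂μ := (integral_const_mul _ _).symm
      _ ≤ ∫ t, ‖Theta ω s f t‖ ^ p * ω t ∂μ :=
          integral_mono (hh_int.const_mul _) hΘint hlb
  -- take 1/p powers
  have hps : (0:ℝ) ≤ 1 / p := by positivity
  constructor
  · have := Real.rpow_le_rpow
      (mul_nonneg (Real.rpow_nonneg (hω_pos s⁻¹).le _) hInn) hJlo hps
    rwa [Real.mul_rpow (Real.rpow_nonneg (hω_pos s⁻¹).le _) hInn,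
      ← Real.rpow_mul (hω_pos s⁻¹).le, mul_one_div] at this
  · have := Real.rpow_le_rpow (integral_nonneg hΘnn) hJup hps
    rwa [Real.mul_rpow (Real.rpow_nonneg (hω_pos s).le _) hInn,
      ← Real.rpow_mul (hω_pos s).le, mul_one_div] at this
end
end

section
/- Let G be a locally compact abelian group with Haar measure μ, ω a symmetric weight on G, and f, g ∈ L¹(G,ω). Then for every s ∈ G and μ-almost every t ∈ G, (g^* ∗_ω Γ_ω^s f)(t) = ((Γ_ω^{s⁻¹} g)^* ∗_ω f)(t), where h^*(r) = conj(h(r⁻¹)) (the modular function of an abelian group being identically 1). -/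
open MeasureTheory

noncomputable section

/-- The weight-dependent convolution
`(f ∗_ω g)(t) = ∫ f(s) g(s⁻¹t) ω(s) ω(s⁻¹t) / ω(t) dμ(s)`. -/
def wConv {G : Type*} [Group G] [MeasurableSpace G] (μ : Measure G) (ω : G → ℝ)
    (f g : G → ℂ) : G → ℂ :=
  fun t => ∫ s, f s * g (s⁻¹ * t) * (((ω s * ω (s⁻¹ * t)) / ω t : ℝ) : ℂ) ∂μ

/-- The operator `(Γ_ω^s f)(t) = f(s⁻¹t) ω(s⁻¹t) / ω(t)`. -/
def Gamma {G : Type*} [Group G] (ω : G → ℝ) (s : G) (f : G → ℂ) : G → ℂ :=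
  fun t => f (s⁻¹ * t) * ((ω (s⁻¹ * t) / ω t : ℝ) : ℂ)

/-- The involution `h^*(r) = conj(h(r⁻¹))` (abelian group, modular function ≡ 1). -/
def invol {G : Type*} [Group G] (h : G → ℂ) : G → ℂ :=
  fun r => (starRingEnd ℂ) (h r⁻¹)

/-- `g^* ∗_ω Γ_ω^s f = (Γ_ω^{s⁻¹} g)^* ∗_ω f` almost everywhere. -/
theorem invol_conv_gamma
    {G : Type*} [CommGroup G] [TopologicalSpace G] [IsTopologicalGroup G]
    [LocallyCompactSpace G] [MeasurableSpace G] [BorelSpace G]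
    (μ : Measure G) [μ.IsHaarMeasure]
    (ω : G → ℝ) (hω_meas : Measurable ω) (hω_pos : ∀ s : G, 0 < ω s)
    (hω_sub : ∀ s t : G, ω (s * t) ≤ ω s * ω t) (hω_one : ω 1 = 1)
    (hω_symm : ∀ s : G, ω s⁻¹ = ω s)
    (f g : G → ℂ) (hf_meas : Measurable f) (hg_meas : Measurable g)
    (hf : Integrable (fun s => f s * (ω s : ℂ)) μ)
    (hg : Integrable (fun s => g s * (ω s : ℂ)) μ) (s : G) :
    ∀ᵐ t ∂μ, wConv μ ω (invol g) (Gamma ω s f) t =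
      wConv μ ω (invol (Gamma ω s⁻¹ g)) f t := by
  refine Filter.Eventually.of_forall fun t => ?_
  unfold wConv invol Gamma
  rw [← MeasureTheory.integral_mul_right_eq_self
      (fun r => (starRingEnd ℂ) (g r⁻¹) *
        (f (s⁻¹ * (r⁻¹ * t)) * ((ω (s⁻¹ * (r⁻¹ * t)) / ω (r⁻¹ * t) : ℝ) : ℂ)) *
        (((ω r * ω (r⁻¹ * t)) / ω t : ℝ) : ℂ)) s⁻¹]
  refine integral_congr_ae (Filter.Eventually.of_forall fun r => ?_)
  simp only [mul_inv_rev, inv_inv, map_mul, Complex.conj_ofReal]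
  have h2 : s⁻¹ * (s * r⁻¹ * t) = r⁻¹ * t := by group
  rw [h2]
  have hsymm : ω (r * s⁻¹) = ω (s * r⁻¹) := by
    rw [← hω_symm (r * s⁻¹)]; congr 1; group
  have hsymm2 : ω r⁻¹ = ω r := hω_symm r
  rw [hsymm, hsymm2]
  have n1 := (hω_pos (r⁻¹ * t)).ne'
  have n2 := (hω_pos t).ne'
  have n3 := (hω_pos r).ne'
  have n4 := (hω_pos (s * r⁻¹ * t)).ne'
  have c1 : ((ω (r⁻¹ * t) : ℝ) : ℂ) ≠ 0 := Complex.ofReal_ne_zero.2 n1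
  have c2 : ((ω t : ℝ) : ℂ) ≠ 0 := Complex.ofReal_ne_zero.2 n2
  have c3 : ((ω r : ℝ) : ℂ) ≠ 0 := Complex.ofReal_ne_zero.2 n3
  have c4 : ((ω (s * r⁻¹ * t) : ℝ) : ℂ) ≠ 0 := Complex.ofReal_ne_zero.2 n4
  have c4' : ((ω (s * t / r) : ℝ) : ℂ) ≠ 0 := by
    rwa [show s * t / r = s * r⁻¹ * t by simp [div_eq_mul_inv, mul_assoc, mul_comm, mul_left_comm]]
  push_cast
  field_simp
end
end

section
/- Let G be a locally compact abelian group with Haar measure μ, ω a symmetric weight on G, and f, g ∈ L¹(G,ω). Then for every s ∈ G and μ-almost every t ∈ G, (g^* ∗_ω Θ_ω^s f)(t) = ((Θ_ω^{s⁻¹} g)^* ∗_ω f)(t), where h^*(r) = conj(h(r⁻¹)) (the modular function of an abelian group being identically 1). -/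
open MeasureTheory

noncomputable section

/-- `g^* ∗_ω Θ_ω^s f = (Θ_ω^{s⁻¹} g)^* ∗_ω f` almost everywhere. -/
theorem invol_conv_theta
    {G : Type*} [CommGroup G] [TopologicalSpace G] [IsTopologicalGroup G]
    [LocallyCompactSpace G] [MeasurableSpace G] [BorelSpace G]
    (μ : Measure G) [μ.IsHaarMeasure]
    (ω : G → ℝ) (hω_meas : Measurable ω) (hω_pos : ∀ s : G, 0 < ω s)
    (hω_sub : ∀ s t : G, ω (s * t) ≤ ω s * ω t) (hω_one : ω 1 = 1)
    (hω_symm : ∀ s : G, ω s⁻¹ = ω s)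
    (f g : G → ℂ) (hf_meas : Measurable f) (hg_meas : Measurable g)
    (hf : Integrable (fun s => f s * (ω s : ℂ)) μ)
    (hg : Integrable (fun s => g s * (ω s : ℂ)) μ) (s : G) :
    ∀ᵐ t ∂μ, wConv μ ω (invol g) (Theta ω s f) t =
      wConv μ ω (invol (Theta ω s⁻¹ g)) f t := by
  refine Filter.Eventually.of_forall fun t => ?_
  have h0 : ∀ x : G, (ω x : ℂ) ≠ 0 := fun x => by
    exact_mod_cast (hω_pos x).ne'
  have key : (fun r => invol g r * Theta ω s f (r⁻¹ * t) *
        (((ω r * ω (r⁻¹ * t)) / ω t : ℝ) : ℂ))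
      = fun r => invol (Theta ω s⁻¹ g) (r * s⁻¹) * f ((r * s⁻¹)⁻¹ * t) *
          (((ω (r * s⁻¹) * ω ((r * s⁻¹)⁻¹ * t)) / ω t : ℝ) : ℂ) := by
    funext r
    have a1 : (r * s⁻¹)⁻¹ * s⁻¹ = r⁻¹ := by
      simp [mul_inv_rev, mul_comm, mul_assoc]
    have a2 : (r * s⁻¹)⁻¹ * t = r⁻¹ * t * s := by
      simp [mul_inv_rev, mul_comm, mul_left_comm, mul_assoc]
    simp only [invol, Theta, a1, a2, map_mul, Complex.conj_ofReal,
      hω_symm (r * s⁻¹), hω_symm r]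
    push_cast
    field_simp
    rw [div_eq_div_iff (mul_ne_zero (h0 _) (h0 _)) (mul_ne_zero (h0 _) (h0 _))]
    ring
  have h1 : wConv μ ω (invol g) (Theta ω s f) t
      = ∫ r, invol (Theta ω s⁻¹ g) (r * s⁻¹) * f ((r * s⁻¹)⁻¹ * t) *
          (((ω (r * s⁻¹) * ω ((r * s⁻¹)⁻¹ * t)) / ω t : ℝ) : ℂ) ∂μ := by
    rw [wConv]; exact congrArg (fun F => ∫ r, F r ∂μ) key
  rw [h1, wConv]
  exact integral_mul_right_eq_self
    (fun r => invol (Theta ω s⁻¹ g) r * f (r⁻¹ * t) *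
      (((ω r * ω (r⁻¹ * t)) / ω t : ℝ) : ℂ)) s⁻¹
end
end

section
/- Let G be a locally compact group with left Haar measure μ and modular function Δ, ω a symmetric weight on G, H a complex Hilbert space, π : G → B(H) a unitary representation, f ∈ L¹(G,ω), and s ∈ G. Suppose T, T' ∈ B(H) satisfy ⟨Tξ, η⟩ = ∫_G f(r) ⟨π(r)ξ, η⟩ ω(r) dμ(r) and ⟨T'ξ, η⟩ = ∫_G (Θ_ω^{s⁻¹} f)(r) ⟨π(r)ξ, η⟩ ω(r) dμ(r) for all ξ, η ∈ H. Then T ∘ π(s) = Δ(s⁻¹) · T'. -/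
open MeasureTheory
open scoped ComplexInnerProductSpace

noncomputable section

/-- `π(f) π(s) = Δ(s⁻¹) π(Θ_ω^{s⁻¹} f)` for the integrated form of a unitary
representation. -/
theorem pi_f_comp_pi_s
    {G : Type*} [Group G] [TopologicalSpace G] [IsTopologicalGroup G]
    [LocallyCompactSpace G] [MeasurableSpace G] [BorelSpace G]
    (μ : Measure G) [μ.IsHaarMeasure]
    (Δ : G → ℝ) (hΔ_pos : ∀ s : G, 0 < Δ s)
    (hΔ : ∀ s : G, μ.map (fun t => t * s) = ENNReal.ofReal (Δ s⁻¹) • μ)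
    (ω : G → ℝ) (hω_meas : Measurable ω) (hω_pos : ∀ s : G, 0 < ω s)
    (hω_sub : ∀ s t : G, ω (s * t) ≤ ω s * ω t) (hω_one : ω 1 = 1)
    (hω_symm : ∀ s : G, ω s⁻¹ = ω s)
    {H : Type*} [NormedAddCommGroup H] [InnerProductSpace ℂ H] [CompleteSpace H]
    (π : G → H →L[ℂ] H)
    (hπ_unitary : ∀ s : G, π s ∈ unitary (H →L[ℂ] H))
    (hπ_mul : ∀ s t : G, π (s * t) = (π s).comp (π t))
    (hπ_one : π 1 = 1)
    (hπ_cont : ∀ ξ : H, Continuous fun s => π s ξ)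
    (f : G → ℂ) (hf_meas : Measurable f)
    (hf : Integrable (fun s => f s * (ω s : ℂ)) μ)
    (s : G) (T T' : H →L[ℂ] H)
    (hT : ∀ ξ η : H, ⟪T ξ, η⟫ = ∫ r, f r * ⟪π r ξ, η⟫ * (ω r : ℂ) ∂μ)
    (hT' : ∀ ξ η : H, ⟪T' ξ, η⟫ = ∫ r, Theta ω s⁻¹ f r * ⟪π r ξ, η⟫ * (ω r : ℂ) ∂μ) :
    T.comp (π s) = ((Δ s⁻¹ : ℝ) : ℂ) • T' := by
  ext ξ
  apply ext_inner_right ℂ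
  intro η
  have hinner : Continuous fun r : G => (⟪π r ξ, η⟫ : ℂ) :=
    (hπ_cont ξ).inner continuous_const
  set k : G → ℂ := fun r => Theta ω s⁻¹ f r * ⟪π r ξ, η⟫ * (ω r : ℂ) with hk
  have hk_meas : Measurable k := by
    apply Measurable.mul
    apply Measurable.mul
    · exact ((hf_meas.comp (measurable_mul_const s⁻¹)).mul
        (Complex.measurable_ofReal.comp
          ((hω_meas.comp (measurable_mul_const s⁻¹)).div hω_meas)))
    · exact hinner.measurable
    · exact Complex.measurable_ofReal.comp hω_meas
  have hmap : Measurable fun t : G => t * s := measurable_mul_const s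
  have step1 : ⟪(T.comp (π s)) ξ, η⟫ = ∫ r, k (r * s) ∂μ := by
    rw [ContinuousLinearMap.comp_apply, hT]
    congr 1; funext r
    have hπrs : π r (π s ξ) = π (r * s) ξ := by rw [hπ_mul]; rfl
    have hωrs : (ω (r * s) : ℂ) ≠ 0 := by
      exact_mod_cast (hω_pos (r * s)).ne'
    simp only [hk, Theta, mul_inv_cancel_right, hπrs]
    push_cast
    field_simp
  have step2 : ∫ r, k (r * s) ∂μ = ∫ r, k r ∂(μ.map fun t => t * s) :=
    (integral_map hmap.aemeasurable hk_meas.aestronglyMeasurable).symm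
  rw [step1, step2, hΔ s, integral_smul_measure,
    ENNReal.toReal_ofReal (hΔ_pos s⁻¹).le]
  rw [ContinuousLinearMap.smul_apply, inner_smul_left, ← hT' ξ η]
  rw [Complex.real_smul]
  simp
end
end
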